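/- (Pure BP case.) Suppose A_MF = ∅, all factors f_a (a ∈ A) are positive, and the beliefs b_i (i ∈ I) and b_a (a ∈ A) are positive probability mass functions satisfying the marginalization constraints b_i(x_i) = ∑_{x_a\x_i} b_a(x_a) for all a ∈ A, i ∈ N(a). Then the following are equivalent: (1) there exist real-valued functions λ_{a,i} on S_i (a ∈ A, i ∈ N(a)) and real constants γ_a (a ∈ A) such that, for all i ∈ I, ln b_i(x_i) = ∑_{a∈N(i)} λ_{a,i}(x_i) + |N(i)| − 1, and for all a ∈ A, ln b_a(x_a) = ln f_a(x_a) − ∑_{i∈N(a)} λ_{a,i}(x_i) + ∑_{i∈N(a)} ln b_i(x_i) + γ_a − 1; (2) there exist positive messages m_{a→i}, n_{i→a} and positive constants z_a satisfying m_{a→i}(x_i) = z_a ∑_{x_a\x_i} f_a(x_a) ∏_{j∈N(a)\i} n_{j→a}(x_j) and n_{i→a}(x_i) = ∏_{c∈N(i)\a} m_{c→i}(x_i) for all a ∈ A, i ∈ N(a), such that b_a(x_a) = z_a f_a(x_a) ∏_{i∈N(a)} n_{i→a}(x_i) and b_i(x_i) = ∏_{a∈N(i)} m_{a→i}(x_i).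 -/

import Mathlib

open Finset

abbrev Cfg {ι : Type} (S : ι → Type) (t : Finset ι) : Type :=
  ∀ j : {x // x ∈ t}, S j.1

private lemma filter_ne_eq_erase {ι : Type} [DecidableEq ι] (t : Finset ι) (i : ι)
    (hi : i ∈ t) :
    (univ.filter (fun j : {x // x ∈ t} => j.1 ≠ i)) = (univ.erase ⟨i, hi⟩) := by
  ext j
  simp [Subtype.ext_iff, and_comm]

set_option maxHeartbeats 1600000 in
theorem statement10
    {ι α : Type} [Fintype ι] [Fintype α] [DecidableEq ι] [DecidableEq α]
    (S : ι → Type) [∀ i, Fintype (S i)] [∀ i, Nonempty (S i)] [∀ i, DecidableEq (S i)]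
    (N : α → Finset ι)
    (hNi : ∀ i : ι, ∃ a : α, i ∈ N a)
    (f : ∀ a : α, Cfg S (N a) → ℝ) (hf : ∀ a xa, 0 < f a xa)
    (ba : ∀ a : α, Cfg S (N a) → ℝ) (bi : ∀ i : ι, S i → ℝ)
    (hbapos : ∀ a : α, ∀ xa, 0 < ba a xa)
    (hbipos : ∀ i : ι, ∀ xi, 0 < bi i xi)
    (hbanorm : ∀ a : α, ∑ xa : Cfg S (N a), ba a xa = 1)
    (hbinorm : ∀ i : ι, ∑ xi : S i, bi i xi = 1)
    (hmarg : ∀ a : α, ∀ i : ι, ∀ hi : i ∈ N a, ∀ xi : S i,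
      bi i xi = ∑ xa : Cfg S (N a), (if xa ⟨i, hi⟩ = xi then ba a xa else 0)) :
    (∃ (lam : α → ∀ i : ι, S i → ℝ) (γa : α → ℝ),
      (∀ i : ι, ∀ xi : S i,
        Real.log (bi i xi) =
          (∑ a ∈ univ.filter (fun c : α => i ∈ N c), lam a i xi)
          + ((univ.filter (fun c : α => i ∈ N c)).card : ℝ) - 1) ∧
      (∀ a : α, ∀ xa : Cfg S (N a),
        Real.log (ba a xa) =
          Real.log (f a xa)
          - (∑ j : {x // x ∈ N a}, lam a j.1 (xa j))
          + (∑ j : {x // x ∈ N a}, Real.log (bi j.1 (xa j)))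
          + γa a - 1))
    ↔
    (∃ (m : α → ∀ i : ι, S i → ℝ) (n : ∀ i : ι, α → S i → ℝ) (z : α → ℝ),
      (∀ a : α, ∀ i ∈ N a, ∀ xi, 0 < m a i xi) ∧
      (∀ i : ι, ∀ a : α, i ∈ N a → ∀ xi, 0 < n i a xi) ∧
      (∀ a : α, 0 < z a) ∧
      (∀ a : α, ∀ i : ι, ∀ hi : i ∈ N a, ∀ xi : S i,
        m a i xi = z a * ∑ xa : Cfg S (N a),
          (if xa ⟨i, hi⟩ = xi then
            f a xa * ∏ j ∈ univ.filter (fun j : {x // x ∈ N a} => j.1 ≠ i), n j.1 a (xa j)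
          else 0)) ∧
      (∀ i : ι, ∀ a : α, i ∈ N a → ∀ xi : S i,
        n i a xi = ∏ c ∈ (univ.filter (fun c : α => i ∈ N c)).erase a, m c i xi) ∧
      (∀ a : α, ∀ xa : Cfg S (N a),
        ba a xa = z a * f a xa * ∏ j : {x // x ∈ N a}, n j.1 a (xa j)) ∧
      (∀ i : ι, ∀ xi : S i,
        bi i xi = ∏ a ∈ univ.filter (fun c : α => i ∈ N c), m a i xi)) := by
  classical
  have hDpos : ∀ i : ι, (0:ℝ) < ((univ.filter (fun c : α => i ∈ N c)).card : ℝ) := by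
    intro i
    obtain ⟨a, ha⟩ := hNi i
    have : a ∈ univ.filter (fun c : α => i ∈ N c) := by simp [ha]
    exact_mod_cast Finset.card_pos.mpr ⟨a, this⟩
  set D : ι → ℝ := fun i => ((univ.filter (fun c : α => i ∈ N c)).card : ℝ) with hDdef
  have hDne : ∀ i, D i ≠ 0 := fun i => (hDpos i).ne'
  constructor
  · rintro ⟨lam, γa, h1, h2⟩
    set m : α → ∀ i : ι, S i → ℝ :=
      fun a i xi => Real.exp (lam a i xi + (D i - 1) / D i) with hmdef
    set n : ∀ i : ι, α → S i → ℝ :=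
      fun i a xi => ∏ c ∈ (univ.filter (fun c : α => i ∈ N c)).erase a, m c i xi with hndef
    set z : α → ℝ :=
      fun a => Real.exp (γa a - 1 + ∑ j : {x // x ∈ N a}, (D j.1 - 1) / D j.1) with hzdef
    have hmpos : ∀ a i xi, 0 < m a i xi := fun a i xi => Real.exp_pos _
    have hnpos : ∀ i a xi, 0 < n i a xi :=
      fun i a xi => Finset.prod_pos (fun c _ => hmpos c i xi)
    have hzpos : ∀ a, 0 < z a := fun a => Real.exp_pos _
    -- bi = ∏ m
    have hbim : ∀ i xi, bi i xi = ∏ a ∈ univ.filter (fun c : α => i ∈ N c), m a i xi := by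
      intro i xi
      have hprod : ∏ a ∈ univ.filter (fun c : α => i ∈ N c), m a i xi
          = Real.exp (∑ a ∈ univ.filter (fun c : α => i ∈ N c),
              (lam a i xi + (D i - 1) / D i)) := by
        rw [Real.exp_sum]
      rw [hprod, Finset.sum_add_distrib, Finset.sum_const, nsmul_eq_mul]
      have hcard : ((univ.filter (fun c : α => i ∈ N c)).card : ℝ) = D i := rfl
      rw [hcard, mul_div_cancel₀ _ (hDne i)]
      rw [← Real.exp_log (hbipos i xi), h1 i xi, hcard]
      ring_nf
    -- bi = m * n (split)
    have hsplit : ∀ a i (hi : i ∈ N a) (xi : S i), bi i xi = m a i xi * n i a xi := by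
      intro a i hi xi
      have hmem : a ∈ univ.filter (fun c : α => i ∈ N c) := by simp [hi]
      rw [hbim i xi, ← Finset.mul_prod_erase _ _ hmem]
    -- n as an exponential
    have hnexp : ∀ a (j : ι) (hj : j ∈ N a) (xj : S j),
        n j a xj = Real.exp (Real.log (bi j xj) - (lam a j xj + (D j - 1) / D j)) := by
      intro a j hj xj
      have h := hsplit a j hj xj
      have hm : m a j xj = Real.exp (lam a j xj + (D j - 1) / D j) := rfl
      have : n j a xj = bi j xj / m a j xj := by
        field_simp [h, (hmpos a j xj).ne']
        rw [h]; ring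
      rw [this, hm, Real.exp_sub]
      congr 1
      rw [Real.exp_log (hbipos j xj)]
    -- ba = z f ∏ n
    have hba' : ∀ a (xa : Cfg S (N a)),
        ba a xa = z a * f a xa * ∏ j : {x // x ∈ N a}, n j.1 a (xa j) := by
      intro a xa
      have hprod : ∏ j : {x // x ∈ N a}, n j.1 a (xa j)
          = Real.exp (∑ j : {x // x ∈ N a},
              (Real.log (bi j.1 (xa j)) - (lam a j.1 (xa j) + (D j.1 - 1) / D j.1))) := by
        rw [Real.exp_sum]
        exact Finset.prod_congr rfl (fun j _ => hnexp a j.1 j.2 (xa j))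
      rw [hprod, hzdef, ← Real.exp_log (hbapos a xa), h2 a xa]
      have key : Real.log (f a xa) - (∑ j : {x // x ∈ N a}, lam a j.1 (xa j))
          + (∑ j : {x // x ∈ N a}, Real.log (bi j.1 (xa j))) + γa a - 1
          = Real.log (f a xa) + ((γa a - 1 + ∑ j : {x // x ∈ N a}, (D j.1 - 1) / D j.1)
            + ∑ j : {x // x ∈ N a},
              (Real.log (bi j.1 (xa j)) - (lam a j.1 (xa j) + (D j.1 - 1) / D j.1))) := by
        simp only [Finset.sum_sub_distrib, Finset.sum_add_distrib]
        ring
      rw [key, Real.exp_add, Real.exp_add, Real.exp_log (hf a xa)]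
      ring
    refine ⟨m, n, z, fun a i _ xi => hmpos a i xi, fun i a _ xi => hnpos i a xi, hzpos,
      ?_, fun i a _ xi => rfl, hba', hbim⟩
    -- message update equation
    intro a i hi xi
    refine mul_left_cancel₀ (hnpos i a xi).ne' ?_
    have lhs : n i a xi * m a i xi = bi i xi := by
      rw [mul_comm]; exact (hsplit a i hi xi).symm
    rw [lhs, hmarg a i hi xi]
    rw [Finset.mul_sum, Finset.mul_sum]
    refine Finset.sum_congr rfl (fun xa _ => ?_)
    split_ifs with h
    · rw [hba' a xa, filter_ne_eq_erase (N a) i hi]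
      rw [← Finset.mul_prod_erase Finset.univ (fun j : {x // x ∈ N a} => n j.1 a (xa j))
        (Finset.mem_univ ⟨i, hi⟩), h]
      ring
    · simp
  · rintro ⟨m, n, z, hmpos, hnpos, hzpos, hm4, hn5, hba6, hbi7⟩
    refine ⟨fun a i xi => Real.log (m a i xi) + (1 - D i) / D i,
      fun a => Real.log (z a) + (∑ j : {x // x ∈ N a}, (1 - D j.1) / D j.1) + 1, ?_, ?_⟩
    · intro i xi
      have hlogm : ∀ c ∈ univ.filter (fun c : α => i ∈ N c), m c i xi ≠ 0 := by
        intro c hc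
        exact (hmpos c i (by simpa using hc) xi).ne'
      rw [hbi7 i xi, Real.log_prod hlogm, Finset.sum_add_distrib, Finset.sum_const,
        nsmul_eq_mul]
      have hcard : ((univ.filter (fun c : α => i ∈ N c)).card : ℝ) = D i := rfl
      rw [hcard, mul_div_cancel₀ _ (hDne i)]
      ring
    · intro a xa
      have hprodpos : (0:ℝ) < ∏ j : {x // x ∈ N a}, n j.1 a (xa j) :=
        Finset.prod_pos (fun j _ => hnpos j.1 a j.2 (xa j))
      rw [hba6 a xa, Real.log_mul (mul_pos (hzpos a) (hf a xa)).ne' hprodpos.ne',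
        Real.log_mul (hzpos a).ne' (hf a xa).ne',
        Real.log_prod (fun j _ => (hnpos j.1 a j.2 (xa j)).ne')]
      have hlogn : ∀ j : {x // x ∈ N a},
          Real.log (n j.1 a (xa j)) = Real.log (bi j.1 (xa j)) - Real.log (m a j.1 (xa j)) := by
        intro j
        have hmem : a ∈ univ.filter (fun c : α => j.1 ∈ N c) := by simp [j.2]
        have hb : bi j.1 (xa j) = m a j.1 (xa j) * n j.1 a (xa j) := by
          rw [hbi7, hn5 j.1 a j.2, ← Finset.mul_prod_erase _ _ hmem]
        rw [hb, Real.log_mul (hmpos a j.1 j.2 (xa j)).ne' (hnpos j.1 a j.2 (xa j)).ne']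
        ring
      rw [Finset.sum_congr rfl (fun j _ => hlogn j)]
      simp only [Finset.sum_sub_distrib, Finset.sum_add_distrib]
      ring
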